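/- A finite set of constraints of the form x < y, x ≤ y, x = y, x ≠ y over variables valued in ℚ is satisfiable if and only if, after replacing each constraint x = y by the pair x ≤ y, y ≤ x and each x < y by the pair x ≤ y, x ≠ y, the following holds: for every constraint x ≠ y, the vertices x and y are not in the same strongly connected component of the directed graph whose arcs are the ≤-constraints. -/
import Mathlib


/-- The four Point Algebra relations. -/
inductive PARel | lt | le | eq | ne
deriving DecidableEq

/-- Satisfaction of a Point Algebra constraint by an assignment `α : V → ℚ`. -/
def PASat {V : Type} (α : V → ℚ) : PARel × V × V → Prop
  | (.lt, x, y) => α x < α y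
  | (.le, x, y) => α x ≤ α y
  | (.eq, x, y) => α x = α y
  | (.ne, x, y) => α x ≠ α y

/-- Arcs of the digraph of ≤-constraints after replacing `x = y` by `x ≤ y, y ≤ x`
and `x < y` by `x ≤ y, x ≠ y`. -/
def leqArc {V : Type} (C : Finset (PARel × V × V)) (u v : V) : Prop :=
  (.le, u, v) ∈ C ∨ (.lt, u, v) ∈ C ∨ (.eq, u, v) ∈ C ∨ (.eq, v, u) ∈ C

/-- A finite set of Point Algebra constraints over ℚ-valued variables is satisfiable iff,
after the replacement, for every ≠-constraint its endpoints are not strongly connected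
in the digraph of ≤-constraints. -/
theorem pointAlgebra_satisfiable_iff {V : Type} [Fintype V]
    (C : Finset (PARel × V × V)) :
    (∃ α : V → ℚ, ∀ c ∈ C, PASat α c) ↔
      ∀ x y : V, ((.ne, x, y) ∈ C ∨ (.lt, x, y) ∈ C) →
        ¬ (Relation.ReflTransGen (leqArc C) x y ∧ Relation.ReflTransGen (leqArc C) y x) := by
  classical
  constructor
  · rintro ⟨α, hα⟩ x y hxy ⟨h1, h2⟩
    have mono : ∀ u v : V, Relation.ReflTransGen (leqArc C) u v → α u ≤ α v := by
      intro u v h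
      induction h with
      | refl => exact le_refl _
      | tail _ harc ih =>
        refine le_trans ih ?_
        rcases harc with h | h | h | h
        · exact hα _ h
        · exact le_of_lt (hα _ h)
        · exact le_of_eq (hα _ h)
        · exact le_of_eq (hα _ h).symm
    have heq : α x = α y := le_antisymm (mono _ _ h1) (mono _ _ h2)
    rcases hxy with h | h
    · exact hα _ h heq
    · exact absurd heq (ne_of_lt (hα _ h))
  · intro H
    set r := Relation.ReflTransGen (leqArc C) with hr
    let s : Setoid V := ⟨fun a b => r a b ∧ r b a,
      ⟨fun a => ⟨Relation.ReflTransGen.refl, Relation.ReflTransGen.refl⟩,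
       fun h => ⟨h.2, h.1⟩,
       fun h1 h2 => ⟨h1.1.trans h2.1, h2.2.trans h1.2⟩⟩⟩
    let Q := Quotient s
    letI : PartialOrder Q :=
      { le := Quotient.lift₂ (fun a b => r a b) (by
          intro a b a' b' ha hb
          simp only [eq_iff_iff]
          exact ⟨fun h => (ha.2.trans h).trans hb.1, fun h => (ha.1.trans h).trans hb.2⟩)
        le_refl := by
          rintro ⟨a⟩
          exact Relation.ReflTransGen.refl
        le_trans := by
          rintro ⟨a⟩ ⟨b⟩ ⟨c⟩ h1 h2
          exact Relation.ReflTransGen.trans h1 h2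
        le_antisymm := by
          rintro ⟨a⟩ ⟨b⟩ h1 h2
          exact Quotient.sound ⟨h1, h2⟩ }
    haveI : Fintype Q := Quotient.fintype s
    letI : Fintype (LinearExtension Q) := inferInstanceAs (Fintype Q)
    let n := Fintype.card (LinearExtension Q)
    let e : LinearExtension Q ≃o Fin n := (monoEquivOfFin _ rfl).symm
    let f : Q → ℚ := fun q => ((e (toLinearExtension q) : Fin n) : ℕ)
    have tinj : Function.Injective (toLinearExtension (α := Q)) := fun a b h => h
    have finj : Function.Injective f := by
      intro a b h
      have h' : ((e (toLinearExtension a) : Fin n) : ℕ) = ((e (toLinearExtension b) : Fin n) : ℕ) :=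
        Nat.cast_injective h
      exact tinj (e.injective (Fin.ext h'))
    have fmono : ∀ a b : Q, a ≤ b → f a ≤ f b := by
      intro a b h
      have : e (toLinearExtension a) ≤ e (toLinearExtension b) :=
        e.monotone (toLinearExtension.monotone h)
      exact Nat.cast_le.mpr this
    let α : V → ℚ := fun v => f ⟦v⟧
    have hmono : ∀ u v : V, r u v → α u ≤ α v := by
      intro u v h
      exact fmono ⟦u⟧ ⟦v⟧ h
    have hne : ∀ u v : V, ¬ (r u v ∧ r v u) → α u ≠ α v := by
      intro u v h heq
      exact h (Quotient.exact (finj heq))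
    refine ⟨α, ?_⟩
    rintro ⟨rel, x, y⟩ hc
    cases rel with
    | le => exact hmono x y (Relation.ReflTransGen.single (Or.inl hc))
    | lt =>
      have hrxy : r x y := Relation.ReflTransGen.single (Or.inr (Or.inl hc))
      have hnb := H x y (Or.inr hc)
      exact lt_of_le_of_ne (hmono x y hrxy) (hne x y hnb)
    | eq =>
      have h1 : r x y := Relation.ReflTransGen.single (Or.inr (Or.inr (Or.inl hc)))
      have h2 : r y x := Relation.ReflTransGen.single (Or.inr (Or.inr (Or.inr hc)))
      exact le_antisymm (hmono x y h1) (hmono y x h2)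
    | ne => exact hne x y (H x y (Or.inl hc))
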